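/- Let (X,B,m) be a σ-finite measure space with m(X)=∞ and T:X→X an invertible, conservative, ergodic, measure-preserving transformation, and let (a_n) be positive constants. Assume T is weakly pointwise dual ergodic with return sequence (a_n), i.e. for every f∈L¹(m) with f≥0: (1/a_n)·S_n^{(T^{-1})}(f) → ∫f dm in measure on every set of finite measure, and limsup_{n→∞} (1/a_n)·S_n^{(T^{-1})}(f) = ∫f dm a.e. (for invertible T the dual operator satisfies T̂f = f∘T^{-1}). Assume moreover that there exists α<∞ such that for every f∈L¹(m) with f≥0, limsup_{n→∞} (1/a_n)·S_n(f) = α·∫f dm a.e. Then the sequence (a_n) has extended regular variation with Karamata indices 1: there exist M>1 and a function N:ℕ→ℕ such that for every integer p≥1 and every n≥N(p), (1/M)·p·a_n ≤ a_{pn} ≤ M·p·a_n. -/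

import Mathlib

open MeasureTheory Filter Set Topology ENNReal

/-- One-sided Birkhoff sum `S_n(f) = Σ_{k=0}^{n-1} f∘T^k` for `ℝ≥0∞`-valued `f`. -/
noncomputable def fwdSumF {X : Type*} (T : X → X) (f : X → ℝ≥0∞) (n : ℕ) (x : X) : ℝ≥0∞ :=
  ∑ k ∈ Finset.range n, f (T^[k] x)

namespace ERVAux

variable {X : Type*}

/-- visit count to `P` along forward iterates of `g`. -/
noncomputable abbrev cnt (g : X → X) (P : Set X) (n : ℕ) (x : X) : ℝ≥0∞ :=
  fwdSumF g (P.indicator 1) n x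

lemma cnt_eq_sum (g : X → X) (P : Set X) (n : ℕ) (x : X) :
    cnt g P n x = ∑ k ∈ Finset.range n, P.indicator (1 : X → ℝ≥0∞) (g^[k] x) := rfl

lemma indicator_le_one (P : Set X) (y : X) : P.indicator (1 : X → ℝ≥0∞) y ≤ 1 := by
  by_cases h : y ∈ P <;> simp [Set.indicator_apply, h]

lemma cnt_mono (g : X → X) (P : Set X) {n₁ n₂ : ℕ} (h : n₁ ≤ n₂) (x : X) :
    cnt g P n₁ x ≤ cnt g P n₂ x := by
  simp only [cnt_eq_sum]
  exact Finset.sum_le_sum_of_subset (Finset.range_subset_range.mpr h)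

lemma cnt_le_nat (g : X → X) (P : Set X) (n : ℕ) (x : X) : cnt g P n x ≤ n := by
  calc cnt g P n x ≤ ∑ _k ∈ Finset.range n, (1 : ℝ≥0∞) :=
        Finset.sum_le_sum fun k _ => indicator_le_one P _
    _ = n := by simp

lemma cnt_mono_set (g : X → X) {P Q : Set X} (h : P ⊆ Q) (n : ℕ) (x : X) :
    cnt g P n x ≤ cnt g Q n x := by
  refine Finset.sum_le_sum fun k _ => ?_
  by_cases hk : g^[k] x ∈ P
  · simp [Set.indicator_apply, hk, h hk]
  · simp [Set.indicator_apply, hk]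

lemma cnt_add (g : X → X) (P : Set X) (n m : ℕ) (x : X) :
    cnt g P (n + m) x = cnt g P n x + cnt g P m (g^[n] x) := by
  induction m with
  | zero => simp [cnt_eq_sum]
  | succ m ih =>
      have h1 : n + (m + 1) = (n + m) + 1 := by ring
      simp only [cnt_eq_sum] at ih ⊢
      rw [h1, Finset.sum_range_succ, Finset.sum_range_succ, ih]
      rw [add_assoc]
      congr 2
      rw [add_comm n m, Function.iterate_add_apply]

lemma cnt_blocks (g : X → X) (P : Set X) (p n : ℕ) (x : X) :
    cnt g P (p * n) x = ∑ j ∈ Finset.range p, cnt g P n (g^[j * n] x) := by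
  induction p with
  | zero => simp [cnt_eq_sum]
  | succ p ih =>
      have h1 : (p + 1) * n = p * n + n := by ring
      rw [h1, cnt_add, ih, Finset.sum_range_succ]

/-- if `i ≤ s` then `T^[s-i] x = T.symm^[i] (T^[s] x)`. -/
lemma iterate_sub_eq_symm {X : Type*} [MeasurableSpace X] (T : X ≃ᵐ X) {i s : ℕ} (h : i ≤ s)
    (x : X) : (⇑T)^[s - i] x = (⇑T.symm)^[i] ((⇑T)^[s] x) := by
  have h2 : (⇑T)^[s] x = (⇑T)^[i] ((⇑T)^[s - i] x) := by
    rw [← Function.iterate_add_apply, Nat.add_sub_cancel' h]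
  rw [h2]
  have hLI : Function.LeftInverse (⇑T.symm) (⇑T) := fun y => T.symm_apply_apply y
  rw [hLI.iterate i _]

/-- last-visit identity: a forward window count equals a backward window count from
the last visited point. -/
lemma last_visit {X : Type*} [MeasurableSpace X] (T : X ≃ᵐ X) (P : Set X) (n : ℕ) (x : X) :
    cnt (⇑T) P n x = 0 ∨
      ∃ s < n, (⇑T)^[s] x ∈ P ∧ cnt (⇑T) P n x = cnt (⇑T.symm) P (s + 1) ((⇑T)^[s] x) := by
  classical
  set V := (Finset.range n).filter (fun k => (⇑T)^[k] x ∈ P) with hV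
  by_cases hVe : V = ∅
  · left
    rw [cnt_eq_sum]
    refine Finset.sum_eq_zero fun k hk => ?_
    have : (⇑T)^[k] x ∉ P := by
      intro hmem
      have : k ∈ V := by simp [hV, Finset.mem_filter, hk, hmem]
      simp [hVe] at this
    simp [Set.indicator_apply, this]
  · right
    have hVne : V.Nonempty := Finset.nonempty_of_ne_empty hVe
    set s := V.max' hVne with hs
    have hsV : s ∈ V := V.max'_mem hVne
    have hsn : s < n := by
      have := (Finset.mem_filter.mp hsV).1
      simpa using this
    have hsinP : (⇑T)^[s] x ∈ P := (Finset.mem_filter.mp hsV).2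
    refine ⟨s, hsn, hsinP, ?_⟩
    have h1 : cnt (⇑T) P n x = cnt (⇑T) P (s + 1) x := by
      rw [cnt_eq_sum, cnt_eq_sum]
      refine (Finset.sum_subset (Finset.range_subset_range.mpr hsn) ?_).symm
      intro k hk hk2
      have hks : s < k := by
        simp only [Finset.mem_range] at hk2
        omega
      have : (⇑T)^[k] x ∉ P := by
        intro hmem
        have hkV : k ∈ V := by simp [hV, Finset.mem_filter, hk, hmem]
        exact absurd (V.le_max' k hkV) (by omega)
      simp [Set.indicator_apply, this]
    rw [h1, cnt_eq_sum, cnt_eq_sum]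
    rw [← Finset.sum_range_reflect]
    refine Finset.sum_congr rfl fun i hi => ?_
    simp only [Finset.mem_range] at hi
    have : s + 1 - 1 - i = s - i := by omega
    rw [this, iterate_sub_eq_symm T (by omega) x]

/-- first-visit identity for backward windows. -/
lemma first_visit {X : Type*} [MeasurableSpace X] (T : X ≃ᵐ X) (P : Set X) (n : ℕ) (x : X) :
    cnt (⇑T.symm) P n x = 0 ∨
      ∃ s < n, (⇑T.symm)^[s] x ∈ P ∧
        cnt (⇑T.symm) P n x = cnt (⇑T.symm) P (n - s) ((⇑T.symm)^[s] x) := by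
  classical
  set V := (Finset.range n).filter (fun k => (⇑T.symm)^[k] x ∈ P) with hV
  by_cases hVe : V = ∅
  · left
    rw [cnt_eq_sum]
    refine Finset.sum_eq_zero fun k hk => ?_
    have : (⇑T.symm)^[k] x ∉ P := by
      intro hmem
      have : k ∈ V := by simp [hV, Finset.mem_filter, hk, hmem]
      simp [hVe] at this
    simp [Set.indicator_apply, this]
  · right
    have hVne : V.Nonempty := Finset.nonempty_of_ne_empty hVe
    set s := V.min' hVne with hs
    have hsV : s ∈ V := V.min'_mem hVne
    have hsn : s < n := by
      have := (Finset.mem_filter.mp hsV).1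
      simpa using this
    have hsinP : (⇑T.symm)^[s] x ∈ P := (Finset.mem_filter.mp hsV).2
    refine ⟨s, hsn, hsinP, ?_⟩
    have hsplit : cnt (⇑T.symm) P n x
        = cnt (⇑T.symm) P s x + cnt (⇑T.symm) P (n - s) ((⇑T.symm)^[s] x) := by
      rw [← cnt_add]
      congr 1
      omega
    have hzero : cnt (⇑T.symm) P s x = 0 := by
      rw [cnt_eq_sum]
      refine Finset.sum_eq_zero fun k hk => ?_
      simp only [Finset.mem_range] at hk
      have : (⇑T.symm)^[k] x ∉ P := by
        intro hmem
        have hkV : k ∈ V := by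
          simp [hV, Finset.mem_filter, hmem]
          omega
        exact absurd (V.min'_le k hkV) (by omega)
      simp [Set.indicator_apply, this]
    rw [hsplit, hzero, zero_add]

/-- centered-window identity: backward + forward `m`-window from `x` is a forward
`(2m-1)`-window from `T^{-(m-1)} x`, plus the center counted once. -/
lemma center_window {X : Type*} [MeasurableSpace X] (T : X ≃ᵐ X) (P : Set X) {m : ℕ}
    (hm : 1 ≤ m) (x : X) :
    cnt (⇑T.symm) P m x + cnt (⇑T) P m x
      = cnt (⇑T) P (2 * m - 1) ((⇑T.symm)^[m - 1] x) + P.indicator 1 x := by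
  set z := (⇑T.symm)^[m - 1] x with hz
  have hTz : (⇑T)^[m - 1] z = x := by
    rw [hz]
    have hRI : Function.LeftInverse (⇑T) (⇑T.symm) := fun y => T.apply_symm_apply y
    exact hRI.iterate (m - 1) x
  have hsplit : cnt (⇑T) P (2 * m - 1) z
      = cnt (⇑T) P (m - 1) z + cnt (⇑T) P m x := by
    have h1 : 2 * m - 1 = (m - 1) + m := by omega
    rw [h1, cnt_add, hTz]
  have h2 : cnt (⇑T) P (m - 1) z = ∑ j ∈ Finset.range (m - 1),
      P.indicator (1 : X → ℝ≥0∞) ((⇑T.symm)^[j + 1] x) := by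
    rw [cnt_eq_sum, ← Finset.sum_range_reflect]
    refine Finset.sum_congr rfl fun i hi => ?_
    simp only [Finset.mem_range] at hi
    have hle : (i + 1) ≤ m - 1 := by omega
    have h4 := iterate_sub_eq_symm T (i := i + 1) (s := m - 1) hle z
    rw [hTz] at h4
    have h5 : m - 1 - 1 - i = m - 1 - (i + 1) := by omega
    rw [h5, h4]
  have h3 : cnt (⇑T.symm) P m x = (∑ j ∈ Finset.range (m - 1),
      P.indicator (1 : X → ℝ≥0∞) ((⇑T.symm)^[j + 1] x)) + P.indicator 1 x := by
    conv_lhs => rw [cnt_eq_sum, show m = (m - 1) + 1 by omega]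
    rw [Finset.sum_range_succ']
    simp
  have hfirst : cnt (⇑T.symm) P m x = cnt (⇑T) P (m - 1) z + P.indicator 1 x := by
    rw [h3, h2]
  rw [hsplit, hfirst]
  ring

end ERVAux

set_option maxHeartbeats 4000000 in
theorem return_sequence_extended_regular_variation
    {X : Type*} [MeasurableSpace X] (m : Measure X) [SigmaFinite m]
    (T : X ≃ᵐ X) (hE : Ergodic (⇑T) m) (hC : Conservative (⇑T) m)
    (hinf : m Set.univ = ∞)
    (a : ℕ → ℝ) (hapos : ∀ n, 0 < a n)
    -- weak pointwise dual ergodicity (for invertible `T`, `T̂f = f ∘ T⁻¹`):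
    -- convergence in measure on every set of finite measure
    (hdual_meas : ∀ f : X → ℝ≥0∞, Measurable f → (∫⁻ x, f x ∂m) ≠ ∞ →
      ∀ E : Set X, MeasurableSet E → m E < ∞ → ∀ ε : ℝ≥0∞, 0 < ε →
        Tendsto (fun n => m (E ∩ {x | ε ≤
            (fwdSumF (⇑T.symm) f n x / ENNReal.ofReal (a n) - ∫⁻ y, f y ∂m) +
            ((∫⁻ y, f y ∂m) - fwdSumF (⇑T.symm) f n x / ENNReal.ofReal (a n))}))
          atTop (𝓝 0))
    -- and a.e. limsup equal to the integral
    (hdual_sup : ∀ f : X → ℝ≥0∞, Measurable f → (∫⁻ x, f x ∂m) ≠ ∞ →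
      ∀ᵐ x ∂m,
        limsup (fun n => fwdSumF (⇑T.symm) f n x / ENNReal.ofReal (a n)) atTop
          = ∫⁻ y, f y ∂m)
    -- bounded rational ergodicity: `α(T) < ∞`
    (α : ℝ≥0∞) (hαfin : α ≠ ∞)
    (hα : ∀ f : X → ℝ≥0∞, Measurable f → (∫⁻ x, f x ∂m) ≠ ∞ →
      ∀ᵐ x ∂m,
        limsup (fun n => fwdSumF (⇑T) f n x / ENNReal.ofReal (a n)) atTop
          = α * ∫⁻ y, f y ∂m) :
    ∃ M : ℝ, 1 < M ∧ ∃ N : ℕ → ℕ, ∀ p : ℕ, 1 ≤ p → ∀ n : ℕ, N p ≤ n →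
      (1 / M) * (p * a n) ≤ a (p * n) ∧ a (p * n) ≤ M * (p * a n) := by
  classical
  open ERVAux in
  -- a set of positive finite measure
  obtain ⟨A, hAmeas, hA0, hAfin⟩ : ∃ A : Set X, MeasurableSet A ∧ m A ≠ 0 ∧ m A ≠ ∞ := by
    by_contra hcon
    push_neg at hcon
    have hnull : ∀ k, m (spanningSets m k) = 0 := by
      intro k
      by_contra hk
      exact absurd (hcon _ (measurableSet_spanningSets m k) hk)
        (measure_spanningSets_lt_top m k).ne
    have : m Set.univ = 0 := by
      rw [← iUnion_spanningSets m]
      exact measure_iUnion_null hnull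
    rw [hinf] at this
    exact top_ne_zero this
  set c := m A with hc
  set av : ℕ → ℝ≥0∞ := fun n => ENNReal.ofReal (a n) with hav
  have hav0 : ∀ n, av n ≠ 0 := fun n => (ENNReal.ofReal_pos.mpr (hapos n)).ne'
  have havfin : ∀ n, av n ≠ ∞ := fun n => ENNReal.ofReal_ne_top
  have hmp : MeasurePreserving (⇑T) m m := hE.toMeasurePreserving
  have hmps : MeasurePreserving (⇑T.symm) m m := hmp.symm T
  have hmpk : ∀ k : ℕ, MeasurePreserving ((⇑T)^[k]) m m := fun k => hmp.iterate k
  -- conservativity of the inverse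
  have hCs : Conservative (⇑T.symm) m := by
    refine ⟨hmps.quasiMeasurePreserving, ?_⟩
    intro s hs h0
    obtain ⟨k, hkpos, hk0⟩ :=
      hC.exists_gt_measure_inter_ne_zero hs.nullMeasurableSet h0 0
    have hsetid : (⇑T)^[k] ⁻¹' (s ∩ (⇑T.symm)^[k] ⁻¹' s) = ((⇑T)^[k] ⁻¹' s) ∩ s := by
      ext y
      simp only [Set.mem_preimage, Set.mem_inter_iff]
      have : (⇑T.symm)^[k] ((⇑T)^[k] y) = y :=
        (Function.LeftInverse.iterate (fun z => T.symm_apply_apply z) k) y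
      rw [this]
    have hmeas2 : MeasurableSet (s ∩ (⇑T.symm)^[k] ⁻¹' s) :=
      hs.inter (hs.preimage (hmps.measurable.iterate k))
    have : m (s ∩ (⇑T.symm)^[k] ⁻¹' s) = m (((⇑T)^[k] ⁻¹' s) ∩ s) := by
      rw [← hsetid, (hmpk k).measure_preimage hmeas2.nullMeasurableSet]
    have hne : m (s ∩ (⇑T.symm)^[k] ⁻¹' s) ≠ 0 := by
      rw [this, Set.inter_comm]
      exact hk0
    obtain ⟨x, hx⟩ := nonempty_of_measure_ne_zero hne
    exact ⟨x, hx.1, k, Nat.pos_iff_ne_zero.mp hkpos, hx.2⟩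
  -- a.e. point of a positive measure set accumulates infinitely many backward visits
  have hcnt_top : ∀ P : Set X, MeasurableSet P → m P ≠ 0 →
      ∀ᵐ x ∂m, x ∈ P → ∀ C : ℕ, ∃ n₀, ∀ n, n₀ ≤ n → (C : ℝ≥0∞) ≤ cnt (⇑T.symm) P n x := by
    intro P hPm hP0
    filter_upwards [hCs.ae_mem_imp_frequently_image_mem hPm.nullMeasurableSet] with x hx hxP C
    have hinfS : {k | (⇑T.symm)^[k] x ∈ P}.Infinite :=
      Nat.frequently_atTop_iff_infinite.mp (hx hxP)
    have key1 : ∀ C : ℕ, ∃ n₀, (C : ℝ≥0∞) ≤ cnt (⇑T.symm) P n₀ x := by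
      intro C
      induction C with
      | zero => exact ⟨0, by simp⟩
      | succ C ih =>
          obtain ⟨n₀, hn₀⟩ := ih
          obtain ⟨k, hkS, hkgt⟩ := hinfS.exists_gt n₀
          refine ⟨k + 1, ?_⟩
          have hnotmem : k ∉ Finset.range n₀ := by simp; omega
          have hsub : insert k (Finset.range n₀) ⊆ Finset.range (k + 1) := by
            intro t ht
            simp only [Finset.mem_insert, Finset.mem_range] at ht ⊢
            rcases ht with h | h
            · omega
            · omega
          calc ((C + 1 : ℕ) : ℝ≥0∞) = 1 + (C : ℝ≥0∞) := by push_cast; ring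
            _ ≤ P.indicator 1 ((⇑T.symm)^[k] x) + cnt (⇑T.symm) P n₀ x := by
                gcongr
                simp only [Set.indicator_apply]
                exact le_of_eq (if_pos hkS).symm
            _ = ∑ t ∈ insert k (Finset.range n₀),
                  P.indicator (1 : X → ℝ≥0∞) ((⇑T.symm)^[t] x) := by
                rw [Finset.sum_insert hnotmem]; rfl
            _ ≤ cnt (⇑T.symm) P (k + 1) x := by
                rw [cnt_eq_sum]
                exact Finset.sum_le_sum_of_subset hsub
    obtain ⟨n₀, hn₀⟩ := key1 C
    exact ⟨n₀, fun n hn => hn₀.trans (cnt_mono _ _ hn x)⟩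
  have hc2lt : c / 2 < c := ENNReal.half_lt_self hA0 hAfin
  -- the normalizing constants tend to infinity
  have ha_top : Tendsto a atTop atTop := by
    rw [Filter.tendsto_atTop]
    by_contra hcon
    push_neg at hcon
    obtain ⟨b, hb⟩ := hcon
    have hb : ∃ᶠ n in atTop, ¬ (b ≤ a n) := hb.mono fun n hn => not_le.mpr hn
    have hb' : ∃ᶠ n in atTop, a n < b := by
      refine hb.mono fun n hn => ?_
      exact lt_of_not_ge hn
    have hindA : Measurable (A.indicator (1 : X → ℝ≥0∞)) := measurable_one.indicator hAmeas
    have hintA : ∫⁻ y, A.indicator 1 y ∂m = c := lintegral_indicator_one hAmeas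
    have hconv := hdual_meas _ hindA (by rw [hintA]; exact hAfin) A hAmeas
      (lt_top_iff_ne_top.mpr hAfin) c (pos_iff_ne_zero.mpr hA0)
    rw [hintA] at hconv
    have hc2pos : (0 : ℝ≥0∞) < c / 2 := ENNReal.div_pos hA0 (by norm_num)
    obtain ⟨N₁, hN₁⟩ := (Filter.eventually_atTop).mp (hconv.eventually_lt_const hc2pos)
    -- the sets where backward counts exceed the fixed constant 2c·(ofReal b)
    set Z : ℕ → Set X := fun n =>
      A ∩ {x | 2 * c * ENNReal.ofReal b ≤ cnt (⇑T.symm) A n x} with hZ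
    have hZmono : Monotone Z := by
      intro n₁ n₂ h
      exact Set.inter_subset_inter_right _ fun x hx => hx.trans (cnt_mono _ _ h x)
    have hZunion : m (⋃ n, Z n) = c := by
      have hsub : ⋃ n, Z n ⊆ A := Set.iUnion_subset fun n => Set.inter_subset_left
      refine le_antisymm (measure_mono hsub) ?_
      obtain ⟨C, hCgt⟩ := ENNReal.exists_nat_gt
        (show (2 * c * ENNReal.ofReal b) ≠ ∞ by
          refine ENNReal.mul_ne_top (ENNReal.mul_ne_top ?_ hAfin) ENNReal.ofReal_ne_top
          simp)
      have hae : ∀ᵐ x ∂m, x ∈ A → x ∈ ⋃ n, Z n := by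
        filter_upwards [hcnt_top A hAmeas hA0] with x hx hxA
        obtain ⟨n₀, hn₀⟩ := hx hxA C
        refine Set.mem_iUnion.mpr ⟨n₀, hxA, ?_⟩
        exact le_trans hCgt.le (hn₀ n₀ le_rfl)
      have hnull : m (A \ ⋃ n, Z n) = 0 := by
        refine measure_mono_null ?_ (ae_iff.mp hae)
        intro x hx
        simp only [Set.mem_setOf_eq]
        intro hcon2
        exact hx.2 (hcon2 hx.1)
      calc c = m A := hc
        _ ≤ m (A \ ⋃ n, Z n) + m (⋃ n, Z n) := by
            refine le_trans (measure_mono ?_) (measure_union_le _ _)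
            intro x hx
            by_cases h : x ∈ ⋃ n, Z n
            · exact Or.inr h
            · exact Or.inl ⟨hx, h⟩
        _ = m (⋃ n, Z n) := by rw [hnull, zero_add]
    have htendZ : Tendsto (fun n => m (Z n)) atTop (𝓝 c) :=
      hZunion ▸ tendsto_measure_iUnion_atTop hZmono
    obtain ⟨n₁, hn₁⟩ := (Filter.eventually_atTop).mp (htendZ.eventually_const_lt hc2lt)
    obtain ⟨n, hnab, hnge⟩ :=
      (hb'.and_eventually (eventually_ge_atTop (max N₁ n₁))).exists
    have hZsub : Z n ⊆ A ∩ {x | c ≤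
        (fwdSumF (⇑T.symm) (A.indicator 1) n x / ENNReal.ofReal (a n) - c +
          (c - fwdSumF (⇑T.symm) (A.indicator 1) n x / ENNReal.ofReal (a n)))} := by
      rintro x ⟨hxA, hxc⟩
      refine ⟨hxA, ?_⟩
      simp only [Set.mem_setOf_eq] at hxc ⊢
      have hmul : 2 * c * av n ≤ cnt (⇑T.symm) A n x := by
        refine le_trans ?_ hxc
        gcongr
        exact ENNReal.ofReal_le_ofReal hnab.le
      have hdiv : 2 * c ≤ cnt (⇑T.symm) A n x / av n :=
        (ENNReal.le_div_iff_mul_le (Or.inl (hav0 n)) (Or.inl (havfin n))).mpr hmul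
      have h2c : c + c ≤ cnt (⇑T.symm) A n x / av n := by
        rw [← two_mul]; exact hdiv
      have : c ≤ cnt (⇑T.symm) A n x / av n - c := ENNReal.le_sub_of_add_le_left hAfin h2c
      exact this.trans le_self_add
    have hlt : m (Z n) < c / 2 :=
      lt_of_le_of_lt (measure_mono hZsub) (hN₁ n (le_trans (le_max_left _ _) hnge))
    exact absurd (hn₁ n (le_trans (le_max_right _ _) hnge)) (not_lt.mpr hlt.le)
  -- measurability of counts
  have hcnt_meas : ∀ (g : X → X), Measurable g → ∀ (P : Set X), MeasurableSet P →
      ∀ w : ℕ, Measurable (fun x => cnt g P w x) := by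
    intro g hg P hP w
    simp only [cnt_eq_sum]
    refine Finset.measurable_sum _ fun k _ => ?_
    exact (measurable_one.indicator hP).comp (hg.iterate k)
  -- THE KEY QUANTITATIVE ESTIMATES
  have key : ∀ ε : ℝ, 0 < ε → ε ≤ 1 / 100 → ∃ N : ℕ, 1 ≤ N ∧ ∀ n, N ≤ n →
      (2 * a n ≤ a (2 * n) + 100 * ε * a n) ∧
      (∀ p : ℕ, 1 ≤ p → a (p * n) ≤ (1 + 100 * ε) * (p * a n)) ∧
      (∀ s : ℕ, N ≤ s → s ≤ n → a s ≤ 2 * a n) := by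
    intro ε hε0 hε1
    set u : ℝ≥0∞ := ENNReal.ofReal ε with hu
    have hu0 : u ≠ 0 := (ENNReal.ofReal_pos.mpr hε0).ne'
    have hufin : u ≠ ∞ := ENNReal.ofReal_ne_top
    set η : ℝ≥0∞ := u * c with hηdef
    have hη0 : η ≠ 0 := mul_ne_zero hu0 hA0
    have hηfin : η ≠ ∞ := ENNReal.mul_ne_top hufin hAfin
    have hcfin' : c < ∞ := lt_top_iff_ne_top.mpr hAfin
    have hcc0 : c * c ≠ 0 := mul_ne_zero hA0 hA0
    have hccfin : c * c ≠ ∞ := ENNReal.mul_ne_top hAfin hAfin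
    -- scalar coefficient tools
    have hco_mul : ∀ q r : ℝ, 0 ≤ q → 0 ≤ r →
        ENNReal.ofReal q * ENNReal.ofReal r = ENNReal.ofReal (q * r) := by
      intro q r hq hr
      exact (ENNReal.ofReal_mul hq).symm
    have hηeq : η = ENNReal.ofReal ε * c := rfl
    have hcη : c + η = ENNReal.ofReal (1 + ε) * c := by
      rw [hηeq, ENNReal.ofReal_add (by norm_num) hε0.le, add_mul, ENNReal.ofReal_one, one_mul]
    have hηsmall : η ≤ ENNReal.ofReal (1 / 100) * c := by
      rw [hηeq]
      exact mul_le_mul_left (ENNReal.ofReal_le_ofReal hε1) c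
    have hindA : Measurable (A.indicator (1 : X → ℝ≥0∞)) := measurable_one.indicator hAmeas
    have hintA : ∫⁻ y, A.indicator 1 y ∂m = c := lintegral_indicator_one hAmeas
    -- Egorov-type monotone family from the a.e. limsup
    have hsupA := hdual_sup _ hindA (by rw [hintA]; exact hAfin)
    set E : ℕ → Set X := fun K =>
      A ∩ ⋂ (w : ℕ), {x | K ≤ w → cnt (⇑T.symm) A w x ≤ (c + η) * av w} with hEdef
    have hEmeas : ∀ K, MeasurableSet (E K) := by
      intro K
      refine hAmeas.inter (MeasurableSet.iInter fun w => ?_)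
      by_cases hKw : K ≤ w
      · simp only [hKw, forall_true_left]
        exact measurableSet_le (hcnt_meas _ hmps.measurable _ hAmeas w) measurable_const
      · simp only [hKw, false_implies, Set.setOf_true]
        exact MeasurableSet.univ
    have hEmono : Monotone E := by
      intro K₁' K₂' hK x hx
      refine ⟨hx.1, Set.mem_iInter.mpr fun w => fun hw => ?_⟩
      exact (Set.mem_iInter.mp hx.2 w) (le_trans hK hw)
    have hEcov : ∀ᵐ x ∂m, x ∈ A → x ∈ ⋃ K, E K := by
      filter_upwards [hsupA] with x hx hxA
      rw [hintA] at hx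
      have hlt : limsup (fun w => fwdSumF (⇑T.symm) (A.indicator 1) w x
          / ENNReal.ofReal (a w)) atTop < c + η := by
        rw [hx]
        exact ENNReal.lt_add_right hAfin hη0
      obtain ⟨K, hK⟩ := (Filter.eventually_atTop).mp (Filter.eventually_lt_of_limsup_lt hlt)
      refine Set.mem_iUnion.mpr ⟨K, hxA, Set.mem_iInter.mpr fun w => fun hKw => ?_⟩
      have h1 := (hK w hKw).le
      rw [ENNReal.div_le_iff (hav0 w) (havfin w)] at h1
      exact h1
    have hEunion : m (⋃ K, E K) = c := by
      refine le_antisymm (measure_mono (Set.iUnion_subset fun K => Set.inter_subset_left)) ?_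
      have hnull : m (A \ ⋃ K, E K) = 0 := by
        refine measure_mono_null ?_ (ae_iff.mp hEcov)
        intro x hx
        simp only [Set.mem_setOf_eq]
        intro hcon2
        exact hx.2 (hcon2 hx.1)
      calc c = m A := hc
        _ ≤ m (A \ ⋃ K, E K) + m (⋃ K, E K) := by
            refine le_trans (measure_mono ?_) (measure_union_le _ _)
            intro x hx
            by_cases h : x ∈ ⋃ K, E K
            · exact Or.inr h
            · exact Or.inl ⟨hx, h⟩
        _ = m (⋃ K, E K) := by rw [hnull, zero_add]
    have htendE : Tendsto (fun K => m (E K)) atTop (𝓝 c) :=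
      hEunion ▸ tendsto_measure_iUnion_atTop hEmono
    obtain ⟨K₁, hK₁⟩ := (Filter.eventually_atTop).mp
      (htendE.eventually_const_lt (ENNReal.sub_lt_self hAfin hA0 hη0))
    set A₂ := E K₁ with hA₂def
    have hA₂meas : MeasurableSet A₂ := hEmeas K₁
    have hA₂sub : A₂ ⊆ A := Set.inter_subset_left
    set c₂ := m A₂ with hc₂def
    have hc₂le : c₂ ≤ c := measure_mono hA₂sub
    have hc₂fin : c₂ ≠ ∞ := (lt_of_le_of_lt hc₂le hcfin').ne
    have hclose : c ≤ c₂ + η := by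
      have h1 : c - η < c₂ := hK₁ K₁ le_rfl
      exact tsub_le_iff_right.mp h1.le
    -- pointwise uniform bound on the Egorov set
    have hA₂bound : ∀ x ∈ A₂, ∀ w, K₁ ≤ w →
        cnt (⇑T.symm) A w x ≤ (c + η) * av w := by
      intro x hx w hw
      exact (Set.mem_iInter.mp hx.2 w) hw
    -- basic sandwiches
    have hc₂ge : ENNReal.ofReal (1 - ε) * c ≤ c₂ := by
      have h1 : ENNReal.ofReal (1 - ε) * c + η = c := by
        rw [hηeq, ← add_mul, ← ENNReal.ofReal_add (by linarith) hε0.le]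
        norm_num
      have h2 : ENNReal.ofReal (1 - ε) * c + η ≤ c₂ + η := h1.le.trans hclose
      exact ENNReal.add_le_add_iff_right hηfin |>.mp h2
    have hc₂0 : c₂ ≠ 0 := by
      intro hcon
      rw [hcon, zero_add] at hclose
      have h2 : c ≤ ENNReal.ofReal (1 / 100) * c := hclose.trans hηsmall
      have h3 : (1 : ℝ≥0∞) * c ≤ ENNReal.ofReal (1 / 100) * c := by rwa [one_mul]
      have h4 : (1 : ℝ≥0∞) ≤ ENNReal.ofReal (1 / 100) :=
        (ENNReal.mul_le_mul_iff_left hA0 hAfin).mp h3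
      rw [← ENNReal.ofReal_one] at h4
      have h5 : (1 : ℝ) ≤ 1 / 100 := by
        exact_mod_cast (ENNReal.ofReal_le_ofReal_iff (by norm_num)).mp h4
      linarith
    have hηc₂ : η ≤ c₂ := by
      refine le_trans ?_ hc₂ge
      refine hηsmall.trans ?_
      exact mul_le_mul_left (ENNReal.ofReal_le_ofReal (by linarith)) c
    set d : ℝ≥0∞ := c₂ - η with hddef
    have hd_add : d + η = c₂ := tsub_add_cancel_of_le hηc₂
    have hdfin : d ≠ ∞ := ((tsub_le_self).trans_lt (lt_of_le_of_lt hc₂le hcfin')).ne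
    have hd_ge : ENNReal.ofReal (1 - 2 * ε) * c ≤ d := by
      have h1 : ENNReal.ofReal (1 - 2 * ε) * c + η ≤ ENNReal.ofReal (1 - ε) * c := by
        rw [hηeq, ← add_mul, ← ENNReal.ofReal_add (by linarith) hε0.le]
        refine mul_le_mul_left (ENNReal.ofReal_le_ofReal (by linarith)) c
      have h2 : ENNReal.ofReal (1 - 2 * ε) * c + η ≤ d + η := by
        rw [hd_add]; exact h1.trans hc₂ge
      exact ENNReal.add_le_add_iff_right hηfin |>.mp h2
    have hd_le : d ≤ c := le_trans tsub_le_self hc₂le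
    -- in-measure control at every scale (lower deviations)
    have hindA₂ : Measurable (A₂.indicator (1 : X → ℝ≥0∞)) := measurable_one.indicator hA₂meas
    have hintA₂ : ∫⁻ y, A₂.indicator 1 y ∂m = c₂ := lintegral_indicator_one hA₂meas
    have hconv₂ := hdual_meas _ hindA₂ (by rw [hintA₂]; exact hc₂fin) A₂ hA₂meas
      (lt_top_iff_ne_top.mpr hc₂fin) η (pos_iff_ne_zero.mpr hη0)
    rw [hintA₂] at hconv₂
    obtain ⟨K₂, hK₂⟩ := (Filter.eventually_atTop).mp
      (hconv₂.eventually_lt_const (pos_iff_ne_zero.mpr hη0))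
    set BadLow : ℕ → Set X := fun w =>
      A₂ ∩ {x | cnt (⇑T.symm) A₂ w x + η * av w ≤ c₂ * av w} with hBadLowdef
    have hBadLowmeas : ∀ w, MeasurableSet (BadLow w) := by
      intro w
      refine hA₂meas.inter ?_
      exact measurableSet_le ((hcnt_meas _ hmps.measurable _ hA₂meas w).add measurable_const)
        measurable_const
    have hBadLow : ∀ w, K₂ ≤ w → m (BadLow w) ≤ η := by
      intro w hw
      refine le_trans (measure_mono (Set.inter_subset_inter_right _ ?_)) (hK₂ w hw).le
      intro x hx
      simp only [Set.mem_setOf_eq] at hx ⊢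
      have hcntfin : cnt (⇑T.symm) A₂ w x ≠ ∞ :=
        ((cnt_le_nat _ _ w x).trans_lt (ENNReal.natCast_lt_top w)).ne
      have hRfin : cnt (⇑T.symm) A₂ w x / av w ≠ ∞ :=
        (ENNReal.div_lt_top hcntfin (hav0 w)).ne
      have hdivle : cnt (⇑T.symm) A₂ w x / av w + η ≤ c₂ := by
        have h1 : (cnt (⇑T.symm) A₂ w x + η * av w) / av w ≤ c₂ :=
          (ENNReal.div_le_iff (hav0 w) (havfin w)).mpr hx
        rwa [ENNReal.add_div, mul_div_assoc, ENNReal.div_self (hav0 w) (havfin w),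
          mul_one] at h1
      have h2 : η ≤ c₂ - cnt (⇑T.symm) A₂ w x / av w := by
        exact ENNReal.le_sub_of_add_le_left hRfin hdivle
      exact h2.trans le_add_self
    -- the correlation sums
    set v : ℕ → ℝ≥0∞ := fun w => ∫⁻ x in A₂, cnt (⇑T.symm) A₂ w x ∂m with hvdef
    have hvmono : Monotone v := fun w₁ w₂ h => lintegral_mono fun x => cnt_mono _ _ h x
    have hvup : ∀ w, K₁ ≤ w → v w ≤ ((c + η) * av w) * c₂ := by
      intro w hw
      calc v w ≤ ∫⁻ _x in A₂, (c + η) * av w ∂m := by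
            refine setLIntegral_mono measurable_const fun x hx => ?_
            exact (cnt_mono_set _ hA₂sub w x).trans (hA₂bound x hx w hw)
        _ = ((c + η) * av w) * c₂ := by rw [setLIntegral_const]
    have hvlow : ∀ w, K₂ ≤ w → (d * av w) * d ≤ v w := by
      intro w hw
      set G := A₂ \ BadLow w with hGdef
      have hGsub : G ⊆ A₂ := Set.diff_subset
      have hGcnt : ∀ x ∈ G, d * av w ≤ cnt (⇑T.symm) A₂ w x := by
        rintro x ⟨hxA₂, hxnb⟩
        have hx2 : ¬(cnt (⇑T.symm) A₂ w x + η * av w ≤ c₂ * av w) := fun hcon =>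
          hxnb ⟨hxA₂, hcon⟩
        have hx3 : c₂ * av w ≤ cnt (⇑T.symm) A₂ w x + η * av w := (not_le.mp hx2).le
        have hx4 : d * av w + η * av w ≤ cnt (⇑T.symm) A₂ w x + η * av w := by
          rw [← add_mul, hd_add]; exact hx3
        exact (ENNReal.add_le_add_iff_right
          (ENNReal.mul_ne_top hηfin (havfin w))).mp hx4
      have hGmeas : MeasurableSet G := hA₂meas.diff (hBadLowmeas w)
      have hGmeasure : d ≤ m G := by
        have h1 : c₂ ≤ m G + m (BadLow w) := by
          refine le_trans (measure_mono ?_) (measure_union_le _ _)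
          intro x hx
          by_cases h : x ∈ BadLow w
          · exact Or.inr h
          · exact Or.inl ⟨hx, h⟩
        have h2 : d + η ≤ m G + η := by
          rw [hd_add]
          exact h1.trans (add_le_add_right (hBadLow w hw) _)
        exact (ENNReal.add_le_add_iff_right hηfin).mp h2
      calc (d * av w) * d ≤ (d * av w) * m G := mul_le_mul_right hGmeasure _
        _ = ∫⁻ _x in G, d * av w ∂m := (setLIntegral_const _ _).symm
        _ ≤ ∫⁻ x in G, cnt (⇑T.symm) A₂ w x ∂m :=
            setLIntegral_mono (hcnt_meas _ hmps.measurable _ hA₂meas w) hGcnt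
        _ ≤ v w := lintegral_mono' (Measure.restrict_mono hGsub le_rfl) le_rfl
    -- almost-monotonicity
    set K₅ := max K₁ K₂ with hK₅def
    have hK5c : ∀ s w : ℕ, K₅ ≤ s → s ≤ w →
        ENNReal.ofReal ((1 - 2 * ε) ^ 2) * av s ≤ ENNReal.ofReal (1 + ε) * av w := by
      intro s w hs hsw
      have h1 : (d * av s) * d ≤ ((c + η) * av w) * c₂ :=
        ((hvlow s (le_trans (le_max_right _ _) hs)).trans (hvmono hsw)).trans
          (hvup w (le_trans (le_max_left _ _) (hs.trans hsw)))
      have hsq : ENNReal.ofReal ((1 - 2 * ε) ^ 2)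
          = ENNReal.ofReal (1 - 2 * ε) * ENNReal.ofReal (1 - 2 * ε) := by
        rw [hco_mul _ _ (by linarith) (by linarith)]
        ring_nf
      have h2 : (c * c) * (ENNReal.ofReal ((1 - 2 * ε) ^ 2) * av s)
          ≤ (c * c) * (ENNReal.ofReal (1 + ε) * av w) := by
        calc (c * c) * (ENNReal.ofReal ((1 - 2 * ε) ^ 2) * av s)
            = (ENNReal.ofReal (1 - 2 * ε) * c * av s) * (ENNReal.ofReal (1 - 2 * ε) * c) := by
              rw [hsq]; ring
          _ ≤ (d * av s) * d := by
              exact mul_le_mul' (mul_le_mul_left hd_ge _) hd_ge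
          _ ≤ ((c + η) * av w) * c₂ := h1
          _ ≤ ((c + η) * av w) * c := mul_le_mul_right hc₂le _
          _ = (c * c) * (ENNReal.ofReal (1 + ε) * av w) := by rw [hcη]; ring
      exact (ENNReal.mul_le_mul_iff_right hcc0 hccfin).mp h2
    have hK5two : ∀ s w : ℕ, K₅ ≤ s → s ≤ w → av s ≤ 2 * av w := by
      intro s w hs hsw
      have h1 := hK5c s w hs hsw
      have hq0 : (0:ℝ) < (1 - 2 * ε) ^ 2 := by nlinarith
      have h2 : ENNReal.ofReal (1 + ε) * av w
          ≤ ENNReal.ofReal ((1 - 2 * ε) ^ 2) * (2 * av w) := by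
        rw [← mul_assoc]
        refine mul_le_mul_left ?_ _
        calc ENNReal.ofReal (1 + ε) ≤ ENNReal.ofReal ((1 - 2 * ε) ^ 2 * 2) := by
              refine ENNReal.ofReal_le_ofReal ?_
              nlinarith
          _ = ENNReal.ofReal ((1 - 2 * ε) ^ 2) * 2 := by
              rw [← hco_mul _ _ hq0.le (by norm_num)]
              norm_num
      have h3 := h1.trans h2
      exact (ENNReal.mul_le_mul_iff_right (ENNReal.ofReal_pos.mpr hq0).ne'
        ENNReal.ofReal_ne_top).mp h3
    -- universal pointwise bounds via first/last entrance into the Egorov set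
    set J : ℝ≥0∞ := (K₅ : ℝ≥0∞) with hJdef
    have hJfin : J ≠ ∞ := ENNReal.natCast_ne_top K₅
    set Dq : ℝ≥0∞ := ENNReal.ofReal ((1 - 2 * ε) ^ 2) with hDqdef
    have hq2 : (0:ℝ) < (1 - 2 * ε) ^ 2 := by nlinarith
    have hDq0 : Dq ≠ 0 := (ENNReal.ofReal_pos.mpr hq2).ne'
    have hDqfin : Dq ≠ ∞ := ENNReal.ofReal_ne_top
    have hDle1 : Dq ≤ 1 := by
      rw [hDqdef, ← ENNReal.ofReal_one]
      exact ENNReal.ofReal_le_ofReal (by nlinarith)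
    have hsq1 : ENNReal.ofReal ((1 + ε) ^ 2)
        = ENNReal.ofReal (1 + ε) * ENNReal.ofReal (1 + ε) := by
      rw [hco_mul _ _ (by linarith) (by linarith)]
      ring_nf
    -- from a good window inside A₂ to the universal bound
    have hwin : ∀ (z : X) (t w : ℕ), z ∈ A₂ → t ≤ w → K₅ ≤ w →
        Dq * cnt (⇑T.symm) A₂ t z ≤ ENNReal.ofReal ((1 + ε) ^ 2) * (c * av w) + J := by
      intro z t w hzA₂ htw hw
      by_cases hbig : K₅ ≤ t
      · have hb1 : cnt (⇑T.symm) A₂ t z ≤ (c + η) * av t :=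
          (cnt_mono_set _ hA₂sub _ _).trans
            (hA₂bound _ hzA₂ _ (le_trans (le_max_left _ _) hbig))
        calc Dq * cnt (⇑T.symm) A₂ t z ≤ Dq * ((c + η) * av t) := mul_le_mul_right hb1 _
          _ = (ENNReal.ofReal (1 + ε) * c) * (Dq * av t) := by rw [hcη]; ring
          _ ≤ (ENNReal.ofReal (1 + ε) * c) * (ENNReal.ofReal (1 + ε) * av w) :=
              mul_le_mul_right (hK5c t w hbig htw) _
          _ = ENNReal.ofReal ((1 + ε) ^ 2) * (c * av w) := by rw [hsq1]; ring
          _ ≤ ENNReal.ofReal ((1 + ε) ^ 2) * (c * av w) + J := le_self_add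
      · have hsmall : t ≤ K₅ := (not_le.mp hbig).le
        calc Dq * cnt (⇑T.symm) A₂ t z ≤ 1 * cnt (⇑T.symm) A₂ t z :=
              mul_le_mul_left hDle1 _
          _ = cnt (⇑T.symm) A₂ t z := one_mul _
          _ ≤ (t : ℝ≥0∞) := cnt_le_nat _ _ _ _
          _ ≤ J := by rw [hJdef]; exact_mod_cast Nat.cast_le.mpr hsmall
          _ ≤ ENNReal.ofReal ((1 + ε) ^ 2) * (c * av w) + J := le_add_self
    have hK3 : ∀ (y : X) (w : ℕ), K₅ ≤ w →
        Dq * cnt (⇑T.symm) A₂ w y ≤ ENNReal.ofReal ((1 + ε) ^ 2) * (c * av w) + J := by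
      intro y w hw
      rcases first_visit T A₂ w y with h0 | ⟨s, hsw, hsP, heq⟩
      · rw [h0, mul_zero]; exact zero_le
      · rw [heq]
        exact hwin _ _ w hsP (Nat.sub_le w s) hw
    have hK6 : ∀ (y : X) (w : ℕ), K₅ ≤ w →
        Dq * cnt (⇑T) A₂ w y ≤ ENNReal.ofReal ((1 + ε) ^ 2) * (c * av w) + J := by
      intro y w hw
      rcases last_visit T A₂ w y with h0 | ⟨s, hsw, hsP, heq⟩
      · rw [h0, mul_zero]; exact zero_le
      · rw [heq]
        exact hwin _ _ w hsP (by omega) hw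
    -- forward mean equals backward mean
    have hcorr : ∀ (g : X → X), Measurable g → ∀ w : ℕ,
        (∫⁻ x in A₂, cnt g A₂ w x ∂m)
          = ∑ k ∈ Finset.range w, m ((g^[k] ⁻¹' A₂) ∩ A₂) := by
      intro g hg w
      have hfun : (fun x => cnt g A₂ w x)
          = fun x => ∑ k ∈ Finset.range w, (g^[k] ⁻¹' A₂).indicator (1 : X → ℝ≥0∞) x := by
        funext x
        rw [cnt_eq_sum]
        refine Finset.sum_congr rfl fun k _ => ?_
        simp [Set.indicator_apply, Set.mem_preimage]
      rw [hfun, lintegral_finset_sum _ (fun k _ =>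
        measurable_one.indicator (hA₂meas.preimage (hg.iterate k)))]
      refine Finset.sum_congr rfl fun k _ => ?_
      rw [lintegral_indicator_one (hA₂meas.preimage (hg.iterate k)),
        Measure.restrict_apply (hA₂meas.preimage (hg.iterate k))]
    have hswap : ∀ k : ℕ,
        m (((⇑T.symm)^[k] ⁻¹' A₂) ∩ A₂) = m (((⇑T)^[k] ⁻¹' A₂) ∩ A₂) := by
      intro k
      have hsymmeas : MeasurableSet (((⇑T.symm)^[k] ⁻¹' A₂) ∩ A₂) :=
        (hA₂meas.preimage (hmps.measurable.iterate k)).inter hA₂meas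
      have hpre : (⇑T)^[k] ⁻¹' (((⇑T.symm)^[k] ⁻¹' A₂) ∩ A₂)
          = ((⇑T)^[k] ⁻¹' A₂) ∩ A₂ := by
        ext y
        simp only [Set.mem_preimage, Set.mem_inter_iff]
        have hy : (⇑T.symm)^[k] ((⇑T)^[k] y) = y :=
          (Function.LeftInverse.iterate (fun z => T.symm_apply_apply z) k) y
        rw [hy]
        tauto
      rw [← (hmpk k).measure_preimage hsymmeas.nullMeasurableSet, hpre]
    have hvfwd : ∀ w, (∫⁻ x in A₂, cnt (⇑T) A₂ w x ∂m) = v w := by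
      intro w
      have h1 : v w = ∑ k ∈ Finset.range w, m (((⇑T.symm)^[k] ⁻¹' A₂) ∩ A₂) := by
        rw [hvdef]
        exact hcorr _ hmps.measurable w
      rw [hcorr _ hmp.measurable w, h1]
      exact Finset.sum_congr rfl fun k _ => (hswap k).symm
    -- absorbing the additive junk
    have hctR : (0:ℝ) < c.toReal := ENNReal.toReal_pos hA0 hAfin
    obtain ⟨Na, hNa⟩ := (Filter.eventually_atTop).mp
      (Filter.tendsto_atTop.mp ha_top (((K₅ : ℝ) + 1) / (ε * c.toReal) + 1))
    have hJabs : ∀ w, Na ≤ w → J + 1 ≤ η * av w := by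
      intro w hw
      have h1 : ((K₅ : ℝ) + 1) / (ε * c.toReal) + 1 ≤ a w := hNa w hw
      have hεc : (0:ℝ) < ε * c.toReal := by positivity
      have h2 : (K₅ : ℝ) + 1 ≤ ε * c.toReal * a w := by
        have h3 : ((K₅ : ℝ) + 1) / (ε * c.toReal) ≤ a w := by linarith
        calc (K₅ : ℝ) + 1 = ε * c.toReal * (((K₅ : ℝ) + 1) / (ε * c.toReal)) := by
              field_simp
          _ ≤ ε * c.toReal * a w := by
              exact mul_le_mul_of_nonneg_left h3 hεc.le
      calc J + 1 = ENNReal.ofReal ((K₅ : ℝ) + 1) := by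
            rw [ENNReal.ofReal_add (Nat.cast_nonneg _) zero_le_one, ENNReal.ofReal_one,
              ENNReal.ofReal_natCast]
        _ ≤ ENNReal.ofReal (ε * c.toReal * a w) := ENNReal.ofReal_le_ofReal h2
        _ = ENNReal.ofReal ε * ENNReal.ofReal c.toReal * ENNReal.ofReal (a w) := by
            rw [ENNReal.ofReal_mul (by positivity), ENNReal.ofReal_mul hε0.le]
        _ = η * av w := by rw [ENNReal.ofReal_toReal hAfin]
    -- main threshold
    set N : ℕ := max (max K₅ Na) 1 with hNdef
    have hNK₅ : K₅ ≤ N := le_trans (le_max_left _ _) (le_max_left _ _)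
    have hNNa : Na ≤ N := le_trans (le_max_right _ _) (le_max_left _ _)
    have hN1 : 1 ≤ N := le_max_right _ _
    have hNK₁ : K₁ ≤ N := le_trans (le_max_left _ _) hNK₅
    have hNK₂ : K₂ ≤ N := le_trans (le_max_right _ _) hNK₅
    have hηltc₂ : η < c₂ := by
      refine lt_of_le_of_lt hηsmall (lt_of_lt_of_le ?_ hc₂ge)
      rw [ENNReal.mul_lt_mul_iff_left hA0 hAfin]
      exact ENNReal.ofReal_lt_ofReal_iff (by linarith) |>.mpr (by linarith)
    -- a point avoiding the backward bad set at any single scale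
    have hgoodpt : ∀ w, K₂ ≤ w → ∃ x, x ∈ A₂ ∧
        c₂ * av w ≤ cnt (⇑T.symm) A₂ w x + η * av w := by
      intro w hw
      have h1 : m (A₂ \ BadLow w) ≠ 0 := by
        intro hcon
        have h2 : c₂ ≤ m (A₂ \ BadLow w) + m (BadLow w) := by
          refine le_trans (measure_mono ?_) (measure_union_le _ _)
          intro x hx
          by_cases h : x ∈ BadLow w
          · exact Or.inr h
          · exact Or.inl ⟨hx, h⟩
        rw [hcon, zero_add] at h2
        exact absurd (h2.trans (hBadLow w hw)) (not_le.mpr hηltc₂)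
      obtain ⟨x, hx⟩ := nonempty_of_measure_ne_zero h1
      refine ⟨x, hx.1, ?_⟩
      have hx2 : ¬(cnt (⇑T.symm) A₂ w x + η * av w ≤ c₂ * av w) := fun hcon =>
        hx.2 ⟨hx.1, hcon⟩
      exact (not_le.mp hx2).le
    -- the uniform upper estimate in ℝ≥0∞ form
    have hupper : ∀ p : ℕ, 1 ≤ p → ∀ w, N ≤ w →
        ENNReal.ofReal ((1 - 2*ε)^2 * (1 - ε) - ε) * av (p * w)
          ≤ ENNReal.ofReal (1 + 3*ε + ε^2) * ((p : ℝ≥0∞) * av w) := by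
      intro p hp w hw
      have hpw : K₂ ≤ p * w := le_trans hNK₂ (hw.trans (Nat.le_mul_of_pos_left w hp))
      obtain ⟨x₁, hx₁A₂, hx₁⟩ := hgoodpt (p * w) hpw
      have hblocks : cnt (⇑T.symm) A₂ (p * w) x₁
          = ∑ j ∈ Finset.range p, cnt (⇑T.symm) A₂ w ((⇑T.symm)^[j * w] x₁) :=
        cnt_blocks _ _ p w x₁
      have hsum : Dq * cnt (⇑T.symm) A₂ (p * w) x₁
          ≤ (p : ℝ≥0∞) * (ENNReal.ofReal ((1 + ε) ^ 2) * (c * av w) + J) := by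
        rw [hblocks, Finset.mul_sum]
        calc ∑ j ∈ Finset.range p, Dq * cnt (⇑T.symm) A₂ w ((⇑T.symm)^[j * w] x₁)
            ≤ ∑ _j ∈ Finset.range p,
                (ENNReal.ofReal ((1 + ε) ^ 2) * (c * av w) + J) :=
              Finset.sum_le_sum fun j _ => hK3 _ w (le_trans hNK₅ hw)
          _ = (p : ℝ≥0∞) * (ENNReal.ofReal ((1 + ε) ^ 2) * (c * av w) + J) := by
              rw [Finset.sum_const, Finset.card_range, nsmul_eq_mul]
      have hJw : J ≤ ENNReal.ofReal ε * (c * av w) := by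
        refine le_trans le_self_add ((hJabs w (le_trans hNNa hw)).trans ?_)
        rw [hηeq]; rw [mul_assoc]
      have hchain : (Dq * ENNReal.ofReal (1 - ε)) * (c * av (p * w))
          ≤ ENNReal.ofReal (1 + 3*ε + ε^2) * ((p : ℝ≥0∞) * (c * av w))
            + ENNReal.ofReal ε * (c * av (p * w)) := by
        calc (Dq * ENNReal.ofReal (1 - ε)) * (c * av (p * w))
            = Dq * ((ENNReal.ofReal (1 - ε) * c) * av (p * w)) := by ring
          _ ≤ Dq * (c₂ * av (p * w)) :=
              mul_le_mul_right (mul_le_mul_left hc₂ge _) _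
          _ ≤ Dq * (cnt (⇑T.symm) A₂ (p * w) x₁ + η * av (p * w)) :=
              mul_le_mul_right hx₁ _
          _ = Dq * cnt (⇑T.symm) A₂ (p * w) x₁ + Dq * (η * av (p * w)) := by ring
          _ ≤ (p : ℝ≥0∞) * (ENNReal.ofReal ((1 + ε) ^ 2) * (c * av w) + J)
                + ENNReal.ofReal ε * (c * av (p * w)) := by
              refine add_le_add hsum ?_
              rw [hηeq]
              calc Dq * (ENNReal.ofReal ε * c * av (p * w))
                  ≤ 1 * (ENNReal.ofReal ε * c * av (p * w)) := mul_le_mul_left hDle1 _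
                _ = ENNReal.ofReal ε * (c * av (p * w)) := by ring
          _ ≤ (p : ℝ≥0∞) * (ENNReal.ofReal ((1 + ε) ^ 2) * (c * av w)
                + ENNReal.ofReal ε * (c * av w)) + ENNReal.ofReal ε * (c * av (p * w)) := by
              gcongr
          _ = ENNReal.ofReal (1 + 3*ε + ε^2) * ((p : ℝ≥0∞) * (c * av w))
                + ENNReal.ofReal ε * (c * av (p * w)) := by
              rw [← add_mul, ← ENNReal.ofReal_add (by nlinarith) hε0.le]
              rw [show (1 + ε)^2 + ε = 1 + 3*ε + ε^2 by ring]
              ring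
      have hsplit : Dq * ENNReal.ofReal (1 - ε)
          = ENNReal.ofReal ((1 - 2*ε)^2 * (1 - ε) - ε) + ENNReal.ofReal ε := by
        rw [hDqdef, hco_mul _ _ hq2.le (by linarith),
          ← ENNReal.ofReal_add (by nlinarith) hε0.le]
        congr 1
        ring
      rw [hsplit, add_mul] at hchain
      have hcancel : ENNReal.ofReal ((1 - 2*ε)^2 * (1 - ε) - ε) * (c * av (p * w))
          ≤ ENNReal.ofReal (1 + 3*ε + ε^2) * ((p : ℝ≥0∞) * (c * av w)) := by
        refine (ENNReal.add_le_add_iff_right ?_).mp hchain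
        exact ENNReal.mul_ne_top ENNReal.ofReal_ne_top
          (ENNReal.mul_ne_top hAfin (havfin _))
      have hfinal : c * (ENNReal.ofReal ((1 - 2*ε)^2 * (1 - ε) - ε) * av (p * w))
          ≤ c * (ENNReal.ofReal (1 + 3*ε + ε^2) * ((p : ℝ≥0∞) * av w)) := by
        calc c * (ENNReal.ofReal ((1 - 2*ε)^2 * (1 - ε) - ε) * av (p * w))
            = ENNReal.ofReal ((1 - 2*ε)^2 * (1 - ε) - ε) * (c * av (p * w)) := by ring
          _ ≤ ENNReal.ofReal (1 + 3*ε + ε^2) * ((p : ℝ≥0∞) * (c * av w)) := hcancel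
          _ = c * (ENNReal.ofReal (1 + 3*ε + ε^2) * ((p : ℝ≥0∞) * av w)) := by ring
      exact (ENNReal.mul_le_mul_iff_right hA0 hAfin).mp hfinal
    -- real form of the upper estimate
    have hQpos : (0:ℝ) < (1 - 2*ε)^2 * (1 - ε) - ε := by nlinarith
    have hupperR : ∀ p : ℕ, 1 ≤ p → ∀ w, N ≤ w →
        a (p * w) ≤ (1 + 100 * ε) * (p * a w) := by
      intro p hp w hw
      have h1 := hupper p hp w hw
      have h2 : ENNReal.ofReal (((1 - 2*ε)^2 * (1 - ε) - ε) * a (p * w))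
          ≤ ENNReal.ofReal ((1 + 3*ε + ε^2) * (p * a w)) := by
        rw [ENNReal.ofReal_mul hQpos.le, ENNReal.ofReal_mul (by nlinarith),
          ENNReal.ofReal_mul (Nat.cast_nonneg p), ENNReal.ofReal_natCast]
        exact h1
      have h3 : ((1 - 2*ε)^2 * (1 - ε) - ε) * a (p * w)
          ≤ (1 + 3*ε + ε^2) * (p * a w) := by
        have hnn : (0:ℝ) ≤ (1 + 3*ε + ε^2) * (p * a w) := by
          have h0 : (0:ℝ) ≤ (p:ℝ) * a w := mul_nonneg (Nat.cast_nonneg p) (hapos w).le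
          nlinarith
        exact (ENNReal.ofReal_le_ofReal_iff hnn).mp h2
      have hpaw : (0:ℝ) ≤ (p : ℝ) * a w := mul_nonneg (Nat.cast_nonneg p) (hapos w).le
      have hq4 : (1:ℝ) - 6*ε ≤ (1 - 2*ε)^2 * (1 - ε) - ε := by
        nlinarith [sq_nonneg ε, hε0.le, hε1]
      have hq5 : (1+100*ε)*(1-6*ε) ≤ (1+100*ε)*((1-2*ε)^2*(1-ε)-ε) :=
        mul_le_mul_of_nonneg_left hq4 (by linarith)
      have hRQ : (1 + 3*ε + ε^2)
          ≤ (1 + 100 * ε) * ((1 - 2*ε)^2 * (1 - ε) - ε) := by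
        nlinarith [hq5, mul_le_mul_of_nonneg_left hε1 hε0.le]
      have h4 : ((1 - 2*ε)^2 * (1 - ε) - ε) * a (p * w)
          ≤ ((1 - 2*ε)^2 * (1 - ε) - ε) * ((1 + 100 * ε) * (p * a w)) := by
        calc ((1 - 2*ε)^2 * (1 - ε) - ε) * a (p * w)
            ≤ (1 + 3*ε + ε^2) * (p * a w) := h3
          _ ≤ ((1 + 100 * ε) * ((1 - 2*ε)^2 * (1 - ε) - ε)) * (p * a w) :=
              mul_le_mul_of_nonneg_right hRQ hpaw
          _ = ((1 - 2*ε)^2 * (1 - ε) - ε) * ((1 + 100 * ε) * (p * a w)) := by ring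
      exact (mul_le_mul_iff_right₀ hQpos).mp h4
    -- the doubling estimate
    have hdouble : ∀ w, N ≤ w → 2 * a w ≤ a (2 * w) + 100 * ε * a w := by
      intro w hw
      have hwK₅ : K₅ ≤ w := hNK₅.trans hw
      have hwK₂ : K₂ ≤ w := hNK₂.trans hw
      have hwNa : Na ≤ w := hNNa.trans hw
      set BadF : Set X := A₂ ∩ {x | cnt (⇑T) A₂ w x
          + ENNReal.ofReal (50*ε) * (c * av w) ≤ c₂ * av w} with hBadFdef
      have hBadFmeas : MeasurableSet BadF := hA₂meas.inter
        (measurableSet_le ((hcnt_meas _ hmp.measurable _ hA₂meas w).add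
          measurable_const) measurable_const)
      set lam : ℝ≥0∞ := Dq * (ENNReal.ofReal (50*ε) * (c * av w)) with hlamdef
      have hlam0 : lam ≠ 0 := by
        refine mul_ne_zero hDq0 (mul_ne_zero ?_ (mul_ne_zero hA0 (hav0 w)))
        exact (ENNReal.ofReal_pos.mpr (by linarith)).ne'
      have hlamfin : lam ≠ ∞ := by
        refine ENNReal.mul_ne_top hDqfin (ENNReal.mul_ne_top ENNReal.ofReal_ne_top
          (ENNReal.mul_ne_top hAfin (havfin w)))
      set Up : ℝ≥0∞ := ENNReal.ofReal ((1 + ε)^2) * (c * av w) + J with hUpdef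
      have hUpfin : Up ≠ ∞ := by
        refine ENNReal.add_ne_top.mpr ⟨?_, hJfin⟩
        exact ENNReal.mul_ne_top ENNReal.ofReal_ne_top
          (ENNReal.mul_ne_top hAfin (havfin w))
      have hptw : ∀ x, Dq * cnt (⇑T) A₂ w x ≤ Up := fun x => hK6 x w hwK₅
      have hgmeas : Measurable (fun x => Dq * cnt (⇑T) A₂ w x) :=
        (hcnt_meas _ hmp.measurable _ hA₂meas w).const_mul Dq
      -- Markov inequality for the forward bad set
      have hBadFlam : ∀ x ∈ BadF, lam ≤ Up - Dq * cnt (⇑T) A₂ w x := by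
        rintro x ⟨_hxA₂, hxb⟩
        simp only [Set.mem_setOf_eq] at hxb
        have hfin1 : Dq * cnt (⇑T) A₂ w x ≠ ∞ :=
          ENNReal.mul_ne_top hDqfin ((cnt_le_nat _ _ w x).trans_lt
            (ENNReal.natCast_lt_top w)).ne
        refine ENNReal.le_sub_of_add_le_left hfin1 ?_
        calc Dq * cnt (⇑T) A₂ w x + lam
            = Dq * (cnt (⇑T) A₂ w x + ENNReal.ofReal (50*ε) * (c * av w)) := by
              rw [hlamdef]; ring
          _ ≤ Dq * (c₂ * av w) := mul_le_mul_right hxb _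
          _ ≤ 1 * (c₂ * av w) := mul_le_mul_left hDle1 _
          _ = c₂ * av w := one_mul _
          _ ≤ c * av w := mul_le_mul_left hc₂le _
          _ ≤ ENNReal.ofReal ((1 + ε)^2) * (c * av w) := by
              nth_rewrite 1 [← one_mul (c * av w)]
              refine mul_le_mul_left ?_ _
              rw [← ENNReal.ofReal_one]
              exact ENNReal.ofReal_le_ofReal (by nlinarith)
          _ ≤ Up := le_self_add
      have hintg : ∫⁻ x in A₂, Dq * cnt (⇑T) A₂ w x ∂m = Dq * v w := by
        rw [lintegral_const_mul _ (hcnt_meas _ hmp.measurable _ hA₂meas w), hvfwd w]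
      have hintgfin : ∫⁻ x in A₂, Dq * cnt (⇑T) A₂ w x ∂m ≠ ∞ := by
        rw [hintg]
        refine ENNReal.mul_ne_top hDqfin ?_
        refine ((hvup w (hNK₁.trans hw)).trans_lt ?_).ne
        refine ENNReal.mul_lt_top (ENNReal.mul_lt_top ?_ ?_) ?_
        · exact ENNReal.add_lt_top.mpr ⟨hcfin', lt_top_iff_ne_top.mpr hηfin⟩
        · exact lt_top_iff_ne_top.mpr (havfin w)
        · exact lt_top_iff_ne_top.mpr hc₂fin
      have hsubint : ∫⁻ x in A₂, (Up - Dq * cnt (⇑T) A₂ w x) ∂m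
          = Up * c₂ - Dq * v w := by
        rw [lintegral_sub hgmeas hintgfin (Filter.Eventually.of_forall fun x => hptw x),
          setLIntegral_const, hintg]
      have hmarkov : lam * m BadF ≤ Up * c₂ - Dq * v w := by
        rw [← hsubint]
        calc lam * m BadF = ∫⁻ _x in BadF, lam ∂m := (setLIntegral_const _ _).symm
          _ ≤ ∫⁻ x in BadF, (Up - Dq * cnt (⇑T) A₂ w x) ∂m :=
              setLIntegral_mono (measurable_const.sub hgmeas) hBadFlam
          _ ≤ ∫⁻ x in A₂, (Up - Dq * cnt (⇑T) A₂ w x) ∂m :=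
              lintegral_mono' (Measure.restrict_mono Set.inter_subset_left le_rfl) le_rfl
      -- numerator bound
      have hDqvlow : ENNReal.ofReal ((1-2*ε)^4) * ((c * c) * av w) ≤ Dq * v w := by
        have h1 : (ENNReal.ofReal (1-2*ε) * c * av w) * (ENNReal.ofReal (1-2*ε) * c)
            ≤ (d * av w) * d :=
          mul_le_mul' (mul_le_mul_left hd_ge _) hd_ge
        calc ENNReal.ofReal ((1-2*ε)^4) * ((c * c) * av w)
            = Dq * ((ENNReal.ofReal (1-2*ε) * c * av w) * (ENNReal.ofReal (1-2*ε) * c)) := by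
              rw [hDqdef,
                show ((1-2*ε)^4 : ℝ) = (1-2*ε)^2 * ((1-2*ε) * (1-2*ε)) by ring,
                ← hco_mul ((1-2*ε)^2) ((1-2*ε) * (1-2*ε)) hq2.le (by nlinarith),
                ← hco_mul (1-2*ε) (1-2*ε) (by nlinarith) (by nlinarith)]
              ring
          _ ≤ Dq * ((d * av w) * d) := mul_le_mul_right h1 _
          _ ≤ Dq * v w := mul_le_mul_right (hvlow w hwK₂) _
      have hnum : Up * c₂ - Dq * v w
          ≤ ENNReal.ofReal (12*ε) * ((c * c) * av w) := by
        rw [tsub_le_iff_right]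
        have hJc : J * c ≤ ENNReal.ofReal ε * ((c * c) * av w) := by
          calc J * c ≤ (η * av w) * c := by
                refine mul_le_mul_left (le_trans le_self_add (hJabs w hwNa)) _
            _ = ENNReal.ofReal ε * ((c * c) * av w) := by rw [hηeq]; ring
        calc Up * c₂ ≤ Up * c := mul_le_mul_right hc₂le _
          _ = ENNReal.ofReal ((1 + ε)^2) * ((c * c) * av w) + J * c := by
              rw [hUpdef]; ring
          _ ≤ (ENNReal.ofReal (11*ε) + ENNReal.ofReal ((1-2*ε)^4))
                * ((c * c) * av w) + ENNReal.ofReal ε * ((c * c) * av w) := by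
              refine add_le_add (mul_le_mul_left ?_ _) hJc
              rw [← ENNReal.ofReal_add (by linarith) (by nlinarith)]
              refine ENNReal.ofReal_le_ofReal ?_
              nlinarith [sq_nonneg ε, sq_nonneg (1-2*ε), hε0.le, hε1]
          _ = ENNReal.ofReal (12*ε) * ((c * c) * av w)
                + ENNReal.ofReal ((1-2*ε)^4) * ((c * c) * av w) := by
              rw [show (12*ε : ℝ) = 11*ε + ε by ring, ENNReal.ofReal_add (by linarith) hε0.le]
              ring
          _ ≤ ENNReal.ofReal (12*ε) * ((c * c) * av w) + Dq * v w := by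
              exact add_le_add_right hDqvlow _
      -- m BadF ≤ c/4
      have hBadFmeasure : m BadF ≤ ENNReal.ofReal (1/4) * c := by
        have h1 : lam * m BadF ≤ lam * (ENNReal.ofReal (1/4) * c) := by
          refine (hmarkov.trans hnum).trans ?_
          have heq : lam * (ENNReal.ofReal (1/4) * c)
              = ENNReal.ofReal ((1-2*ε)^2 * (50*ε) * (1/4)) * ((c * c) * av w) := by
            rw [hlamdef, hDqdef,
              ← hco_mul ((1-2*ε)^2 * (50*ε)) (1/4) (by nlinarith) (by norm_num),
              ← hco_mul ((1-2*ε)^2) (50*ε) hq2.le (by linarith)]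
            ring
          rw [heq]
          refine mul_le_mul_left (ENNReal.ofReal_le_ofReal ?_) _
          nlinarith [sq_nonneg ε, hε0.le, hε1]
        exact (ENNReal.mul_le_mul_iff_right hlam0 hlamfin).mp h1
      -- a doubly good point
      obtain ⟨x₀, hx₀A₂, hx₀B, hx₀F⟩ : ∃ x₀, x₀ ∈ A₂ ∧ x₀ ∉ BadLow w ∧ x₀ ∉ BadF := by
        have hsmall : m (BadLow w ∪ BadF) < c₂ := by
          refine lt_of_le_of_lt (measure_union_le _ _) ?_
          refine lt_of_le_of_lt (add_le_add (hBadLow w hwK₂) hBadFmeasure) ?_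
          refine lt_of_le_of_lt (add_le_add_left hηsmall _) ?_
          rw [← add_mul, ← ENNReal.ofReal_add (by norm_num) (by norm_num)]
          refine lt_of_lt_of_le ?_ hc₂ge
          rw [ENNReal.mul_lt_mul_iff_left hA0 hAfin]
          exact (ENNReal.ofReal_lt_ofReal_iff (by linarith)).mpr (by norm_num; linarith)
        have h1 : m (A₂ \ (BadLow w ∪ BadF)) ≠ 0 := by
          intro hcon
          have h2 : c₂ ≤ m (A₂ \ (BadLow w ∪ BadF)) + m (BadLow w ∪ BadF) := by
            refine le_trans (measure_mono ?_) (measure_union_le _ _)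
            intro x hx
            by_cases h : x ∈ BadLow w ∪ BadF
            · exact Or.inr h
            · exact Or.inl ⟨hx, h⟩
          rw [hcon, zero_add] at h2
          exact absurd h2 (not_le.mpr hsmall)
        obtain ⟨x₀, hx₀⟩ := nonempty_of_measure_ne_zero h1
        exact ⟨x₀, hx₀.1, fun h => hx₀.2 (Or.inl h), fun h => hx₀.2 (Or.inr h)⟩
      have hxb : c₂ * av w ≤ cnt (⇑T.symm) A₂ w x₀ + η * av w := by
        have h := fun hcon => hx₀B ⟨hx₀A₂, hcon⟩
        exact (not_le.mp h).le
      have hxf : c₂ * av w ≤ cnt (⇑T) A₂ w x₀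
          + ENNReal.ofReal (50*ε) * (c * av w) := by
        have h := fun hcon => hx₀F ⟨hx₀A₂, hcon⟩
        exact (not_le.mp h).le
      -- assemble via the centered window
      set z := (⇑T.symm)^[w - 1] x₀ with hzdef
      have hcenter := center_window T A₂ (le_trans hN1 hw) x₀
      have hcw : cnt (⇑T.symm) A₂ w x₀ + cnt (⇑T) A₂ w x₀
          ≤ cnt (⇑T) A₂ (2 * w) z + 1 := by
        rw [hcenter]
        exact add_le_add (cnt_mono _ _ (by omega) _) (indicator_le_one _ _)
      have hchain2 : (Dq * (2 * ENNReal.ofReal (1 - ε))) * (c * av w)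
          ≤ ENNReal.ofReal ((1 + ε)^2) * (c * av (2 * w))
            + ENNReal.ofReal (52*ε) * (c * av w) := by
        calc (Dq * (2 * ENNReal.ofReal (1 - ε))) * (c * av w)
            = Dq * (2 * ((ENNReal.ofReal (1 - ε) * c) * av w)) := by ring
          _ ≤ Dq * (2 * (c₂ * av w)) := by
              exact mul_le_mul_right (mul_le_mul_right (mul_le_mul_left hc₂ge _) _) _
          _ = Dq * (c₂ * av w + c₂ * av w) := by ring
          _ ≤ Dq * ((cnt (⇑T.symm) A₂ w x₀ + η * av w)
                + (cnt (⇑T) A₂ w x₀ + ENNReal.ofReal (50*ε) * (c * av w))) :=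
              mul_le_mul_right (add_le_add hxb hxf) _
          _ = Dq * ((cnt (⇑T.symm) A₂ w x₀ + cnt (⇑T) A₂ w x₀)
                + (η * av w + ENNReal.ofReal (50*ε) * (c * av w))) := by ring
          _ ≤ Dq * ((cnt (⇑T) A₂ (2 * w) z + 1)
                + (η * av w + ENNReal.ofReal (50*ε) * (c * av w))) :=
              mul_le_mul_right (add_le_add_left hcw _) _
          _ = Dq * cnt (⇑T) A₂ (2 * w) z
                + (Dq * 1 + Dq * (η * av w + ENNReal.ofReal (50*ε) * (c * av w))) := by
              ring
          _ ≤ (ENNReal.ofReal ((1 + ε)^2) * (c * av (2 * w)) + J)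
                + (1 + (η * av w + ENNReal.ofReal (50*ε) * (c * av w))) := by
              refine add_le_add (hK6 z (2 * w) (by omega)) (add_le_add ?_ ?_)
              · simpa using hDle1
              · nth_rewrite 2 [← one_mul (η * av w + ENNReal.ofReal (50*ε) * (c * av w))]
                exact mul_le_mul_left hDle1 _
          _ = ENNReal.ofReal ((1 + ε)^2) * (c * av (2 * w))
                + ((J + 1) + (η * av w + ENNReal.ofReal (50*ε) * (c * av w))) := by ring
          _ ≤ ENNReal.ofReal ((1 + ε)^2) * (c * av (2 * w))
                + ((η * av w + (η * av w + ENNReal.ofReal (50*ε) * (c * av w)))) :=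
              add_le_add_right (add_le_add_left (hJabs w hwNa) _) _
          _ = ENNReal.ofReal ((1 + ε)^2) * (c * av (2 * w))
                + ENNReal.ofReal (52*ε) * (c * av w) := by
              rw [hηeq, show (52*ε : ℝ) = ε + (ε + 50*ε) by ring,
                ENNReal.ofReal_add hε0.le (by linarith),
                ENNReal.ofReal_add hε0.le (by linarith)]
              ring
      -- pass to the reals
      have hcoefeq : Dq * (2 * ENNReal.ofReal (1 - ε))
          = ENNReal.ofReal (2 * (1-2*ε)^2 * (1 - ε)) := by
        rw [show (2 * (1-2*ε)^2 * (1 - ε) : ℝ) = (2 * (1-2*ε)^2) * (1-ε) by ring,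
          ← hco_mul (2 * (1-2*ε)^2) (1-ε) (by nlinarith) (by linarith),
          ← hco_mul 2 ((1-2*ε)^2) (by norm_num) hq2.le,
          hDqdef, show ENNReal.ofReal (2:ℝ) = 2 by norm_num]
        ring
      have hreal1 : 2 * (1-2*ε)^2 * (1 - ε) * a w
          ≤ (1 + ε)^2 * a (2 * w) + 52*ε * a w := by
        have h1 := hchain2
        rw [hcoefeq] at h1
        have h2 : ENNReal.ofReal ((2 * (1-2*ε)^2 * (1 - ε)) * a w)
            ≤ ENNReal.ofReal ((1 + ε)^2 * a (2 * w) + 52*ε * a w) := by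
          rw [ENNReal.ofReal_add (mul_nonneg (sq_nonneg _) (hapos (2*w)).le)
            (mul_nonneg (by linarith) (hapos w).le)]
          rw [ENNReal.ofReal_mul (p := 2 * (1-2*ε)^2 * (1 - ε)) (by nlinarith),
            ENNReal.ofReal_mul (p := (1 + ε)^2) (sq_nonneg _),
            ENNReal.ofReal_mul (p := 52*ε) (by linarith)]
          have h3 : c * (ENNReal.ofReal (2 * (1-2*ε)^2 * (1 - ε)) * ENNReal.ofReal (a w))
              ≤ c * (ENNReal.ofReal ((1 + ε)^2) * ENNReal.ofReal (a (2*w))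
                + ENNReal.ofReal (52*ε) * ENNReal.ofReal (a w)) := by
            calc c * (ENNReal.ofReal (2 * (1-2*ε)^2 * (1 - ε)) * ENNReal.ofReal (a w))
                = ENNReal.ofReal (2 * (1-2*ε)^2 * (1 - ε)) * (c * av w) := by ring
              _ ≤ ENNReal.ofReal ((1 + ε)^2) * (c * av (2 * w))
                  + ENNReal.ofReal (52*ε) * (c * av w) := h1
              _ = c * (ENNReal.ofReal ((1 + ε)^2) * ENNReal.ofReal (a (2*w))
                  + ENNReal.ofReal (52*ε) * ENNReal.ofReal (a w)) := by ring
          exact (ENNReal.mul_le_mul_iff_right hA0 hAfin).mp h3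
        have hnn : (0:ℝ) ≤ (1 + ε)^2 * a (2 * w) + 52*ε * a w := by
          nlinarith [(hapos (2*w)).le, (hapos w).le]
        exact (ENNReal.ofReal_le_ofReal_iff hnn).mp h2
      have hup2 : a (2 * w) ≤ 4 * a w := by
        have h1 := hupperR 2 (by norm_num) w hw
        have : (1 + 100 * ε) * (2 * a w) ≤ 4 * a w := by nlinarith [(hapos w).le]
        calc a (2 * w) ≤ (1 + 100 * ε) * ((2:ℕ) * a w) := h1
          _ = (1 + 100 * ε) * (2 * a w) := by norm_num
          _ ≤ 4 * a w := this
      nlinarith [hreal1, hup2, (hapos w).le, (hapos (2*w)).le, sq_nonneg ε,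
        mul_le_mul_of_nonneg_left hε1 (hapos w).le,
        mul_le_mul_of_nonneg_right hε1 (hapos (2*w)).le]
    -- packaging
    refine ⟨N, hN1, fun n hn => ⟨hdouble n hn, fun p hp => hupperR p hp n hn, ?_⟩⟩
    intro s hs hsn
    have h1 := hK5two s n (hNK₅.trans hs) hsn
    have h2 : ENNReal.ofReal (a s) ≤ ENNReal.ofReal (2 * a n) := by
      rw [ENNReal.ofReal_mul (by norm_num)]
      calc ENNReal.ofReal (a s) = av s := rfl
        _ ≤ 2 * av n := h1
        _ = ENNReal.ofReal 2 * ENNReal.ofReal (a n) := by norm_num; rfl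
    exact (ENNReal.ofReal_le_ofReal_iff (by nlinarith [(hapos n).le])).mp h2
  -- ASSEMBLY: take M = 8
  refine ⟨8, by norm_num, ?_⟩
  obtain ⟨N₀, hN₀1, hN₀⟩ := key (1/100) (by norm_num) le_rfl
  have keyk : ∀ k : ℕ, ∃ N : ℕ, 1 ≤ N ∧ ∀ n, N ≤ n →
      (2 * a n ≤ a (2 * n) + 100 * (1/(800*((k:ℝ)+1))) * a n) ∧
      (∀ p : ℕ, 1 ≤ p → a (p * n) ≤ (1 + 100 * (1/(800*((k:ℝ)+1)))) * (p * a n)) ∧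
      (∀ s : ℕ, N ≤ s → s ≤ n → a s ≤ 2 * a n) := by
    intro k
    refine key _ (by positivity) ?_
    rw [div_le_div_iff₀ (by positivity) (by norm_num)]
    have hk1 : (0:ℝ) ≤ (k:ℝ) := Nat.cast_nonneg k
    nlinarith
  choose Nf hNf1 hNf using keyk
  refine ⟨fun p => max (Nf (Nat.log2 p)) N₀, ?_⟩
  intro p hp n hn
  have hnN₀ : N₀ ≤ n := le_trans (le_max_right _ _) hn
  have hnNf : Nf (Nat.log2 p) ≤ n := le_trans (le_max_left _ _) hn
  have hp0 : p ≠ 0 := by omega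
  set k := Nat.log2 p with hkdef
  have h2k : 2 ^ k ≤ p := Nat.log2_self_le hp0
  have hpk : p < 2 ^ (k+1) := Nat.lt_log2_self
  set ε' : ℝ := 1/(800*((k:ℝ)+1)) with hε'def
  have hkpos : (0:ℝ) < (k:ℝ) + 1 := by positivity
  have hε'pos : 0 < ε' := by positivity
  have hε'le : 100 * ε' ≤ 1/8 := by
    rw [hε'def]
    rw [show (100:ℝ) * (1/(800*((k:ℝ)+1))) = 100 / (800*((k:ℝ)+1)) by ring]
    rw [div_le_div_iff₀ (by positivity) (by norm_num)]
    nlinarith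
  constructor
  · -- lower bound
    have hchain : ∀ j : ℕ, j ≤ k → (2 - 100*ε')^j * a n ≤ a (2^j * n) := by
      intro j
      induction j with
      | zero =>
          intro _
          simp
      | succ j ih =>
          intro hjk
          have hj := ih (by omega)
          have hw : Nf k ≤ 2^j * n :=
            le_trans hnNf (Nat.le_mul_of_pos_left n (Nat.two_pow_pos j))
          have hdb := (hNf k (2^j * n) hw).1
          have h1 : (2 - 100*ε') * a (2^j*n) ≤ a (2*(2^j*n)) := by linarith
          have h2 : (2:ℕ)^(j+1) * n = 2*(2^j*n) := by ring
          rw [h2]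
          calc (2 - 100*ε')^(j+1) * a n = (2 - 100*ε') * ((2-100*ε')^j * a n) := by ring
            _ ≤ (2 - 100*ε') * a (2^j*n) := by
                refine mul_le_mul_of_nonneg_left hj (by linarith)
            _ ≤ a (2*(2^j*n)) := h1
    have hpow : (15/16) * ((2:ℝ)^k) ≤ (2 - 100*ε')^k := by
      have hx : (2 - 100*ε')^k = 2^k * (1 - 50*ε')^k := by
        rw [← mul_pow]; congr 1; ring
      rw [hx]
      rw [mul_comm ((15:ℝ)/16) _]
      refine mul_le_mul_of_nonneg_left ?_ (by positivity)
      have h1 : 1 + (k:ℝ) * (-(50*ε')) ≤ (1 + (-(50*ε')))^k :=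
        one_add_mul_le_pow (by nlinarith) k
      have h2 : (15:ℝ)/16 ≤ 1 + (k:ℝ) * (-(50*ε')) := by
        have h3 : (k:ℝ) * (50 * ε') ≤ 1/16 := by
          rw [hε'def]
          rw [show (k:ℝ) * (50 * (1/(800*((k:ℝ)+1)))) = (k:ℝ) / (16*((k:ℝ)+1)) by
            field_simp; ring]
          rw [div_le_div_iff₀ (by positivity) (by norm_num)]
          nlinarith
        nlinarith
      refine le_trans h2 ?_
      rw [sub_eq_add_neg]; exact h1
    have hmono := (hN₀ (p*n) (le_trans hnN₀ (Nat.le_mul_of_pos_left n (by omega)))).2.2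
      (2^k * n) (le_trans hnN₀ (Nat.le_mul_of_pos_left n (Nat.two_pow_pos k)))
      (Nat.mul_le_mul_right n h2k)
    have hch := hchain k le_rfl
    have hpr : (p:ℝ) ≤ 2 * 2^k := by
      have h5 : (p:ℝ) < 2^(k+1) := by exact_mod_cast hpk
      rw [pow_succ] at h5
      linarith
    have h3' : (15/16) * ((2:ℝ)^k * a n) ≤ 2 * a (p*n) := by
      calc (15/16) * ((2:ℝ)^k * a n) = ((15/16) * ((2:ℝ)^k)) * a n := by ring
        _ ≤ (2 - 100*ε')^k * a n := mul_le_mul_of_nonneg_right hpow (hapos n).le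
        _ ≤ a (2^k * n) := hch
        _ ≤ 2 * a (p*n) := hmono
    have h4 : (p:ℝ) * a n ≤ 2 * ((2:ℝ)^k * a n) := by
      have h6 := mul_le_mul_of_nonneg_right hpr (hapos n).le
      calc (p:ℝ) * a n ≤ (2 * 2^k) * a n := h6
        _ = 2 * ((2:ℝ)^k * a n) := by ring
    have hA0' : (0:ℝ) ≤ (2:ℝ)^k * a n :=
      mul_nonneg (by positivity) (hapos n).le
    have : (1:ℝ)/8 * ((p:ℝ) * a n) ≤ a (p * n) := by linarith
    exact this
  · -- upper bound
    have hupp := (hN₀ n hnN₀).2.1 p hp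
    have he2 : (1 + 100 * (1/100 : ℝ)) = 2 := by norm_num
    rw [he2] at hupp
    have hpan : (0:ℝ) ≤ (p:ℝ) * a n := mul_nonneg (Nat.cast_nonneg p) (hapos n).le
    calc a (p*n) ≤ 2 * ((p:ℝ) * a n) := hupp
      _ ≤ 8 * ((p:ℝ) * a n) := by nlinarith
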